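/- Let p, q be natural numbers, each not divisible by 2, not divisible by 3 and not equal to 1, with gcd(p,q) = 1. Then for every integer k with 1 ≤ k ≤ p − 1, the complex number cos(πk/p) does not belong to the subfield ℚ(e^{iπ/q}) of ℂ, i.e. cos(πk/p) is not in the smallest subfield of ℂ containing ℚ and e^{iπ/q}. -/

import Mathlib

open Real

open Complex Polynomial IntermediateField

lemma finrank_adjoin_prim (n : ℕ) (hn : 0 < n) (ζ : ℂ) (h : IsPrimitiveRoot ζ n) :
    Module.finrank ℚ (IntermediateField.adjoin ℚ {ζ}) = Nat.totient n := by
  lift n to ℕ+ using hn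
  haveI := h.adjoin_isCyclotomicExtension ℚ
  have hint : IsIntegral ℚ ζ := (h.isIntegral n.pos).tower_top
  have heq : (IntermediateField.adjoin ℚ {ζ}).toSubalgebra = Algebra.adjoin ℚ {ζ} :=
    IntermediateField.adjoin_simple_toSubalgebra_of_isAlgebraic hint.isAlgebraic
  have : Module.finrank ℚ (IntermediateField.adjoin ℚ {ζ}) =
      Module.finrank ℚ (Algebra.adjoin ℚ {ζ}) := by
    rw [← heq]; rfl
  rw [this]
  exact IsCyclotomicExtension.finrank (Algebra.adjoin ℚ {ζ})
    (cyclotomic.irreducible_rat n.pos)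

lemma prim_root_exp (m : ℕ) (hm : m ≠ 0) :
    IsPrimitiveRoot (Complex.exp ((π : ℂ) * Complex.I / m)) (2 * m) := by
  have h := Complex.isPrimitiveRoot_exp (2 * m) (by positivity)
  convert h using 2
  have : (m : ℂ) ≠ 0 := Nat.cast_ne_zero.mpr hm
  push_cast
  field_simp

lemma inter_bot (p q : ℕ) (hp : ¬ 2 ∣ p) (hq : ¬ 2 ∣ q) (hp0 : p ≠ 0) (hq0 : q ≠ 0)
    (hpq : Nat.Coprime p q) :
    (IntermediateField.adjoin ℚ {Complex.exp ((π : ℂ) * Complex.I / q)}) ⊓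
      (IntermediateField.adjoin ℚ {Complex.exp ((π : ℂ) * Complex.I / p)}) = ⊥ := by
  set ζq := Complex.exp ((π : ℂ) * Complex.I / q) with hζq
  set ζp := Complex.exp ((π : ℂ) * Complex.I / p) with hζp
  set ζ := Complex.exp ((π : ℂ) * Complex.I / (p * q)) with hζ
  have hq' : IsPrimitiveRoot ζq (2 * q) := prim_root_exp q hq0
  have hp' : IsPrimitiveRoot ζp (2 * p) := prim_root_exp p hp0
  have hpq0 : (p * q : ℕ) ≠ 0 := by positivity
  have h' : IsPrimitiveRoot ζ (2 * (p * q)) := by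
    have := prim_root_exp (p * q) hpq0
    convert this using 3
    push_cast; ring
  set K := IntermediateField.adjoin ℚ {ζq} with hK
  set L := IntermediateField.adjoin ℚ {ζp} with hL
  set M := IntermediateField.adjoin ℚ {ζ} with hM
  have hpC : (p : ℂ) ≠ 0 := Nat.cast_ne_zero.mpr hp0
  have hqC : (q : ℂ) ≠ 0 := Nat.cast_ne_zero.mpr hq0
  -- ζq = ζ ^ p, ζp = ζ ^ q
  have hzq : ζ ^ p = ζq := by
    rw [hζ, hζq, ← Complex.exp_nat_mul]
    congr 1
    field_simp
  have hzp : ζ ^ q = ζp := by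
    rw [hζ, hζp, ← Complex.exp_nat_mul]
    congr 1
    field_simp
  have hζM : ζ ∈ M := IntermediateField.mem_adjoin_simple_self ℚ ζ
  have hKM : K ≤ M := by
    rw [hK, IntermediateField.adjoin_le_iff]
    intro x hx
    rw [Set.mem_singleton_iff] at hx
    subst hx
    exact hzq ▸ pow_mem hζM p
  have hLM : L ≤ M := by
    rw [hL, IntermediateField.adjoin_le_iff]
    intro x hx
    rw [Set.mem_singleton_iff] at hx
    subst hx
    exact hzp ▸ pow_mem hζM q
  -- M ≤ K ⊔ L
  have hcop : Nat.Coprime p (2 * q) := by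
    refine Nat.Coprime.mul_right ?_ hpq
    exact (Nat.coprime_comm.mp ((Nat.prime_two.coprime_iff_not_dvd).mpr hp))
  have hMKL : M ≤ K ⊔ L := by
    rw [hM, IntermediateField.adjoin_le_iff]
    intro x hx
    rw [Set.mem_singleton_iff] at hx
    subst hx
    obtain ⟨u, v, huv⟩ : IsCoprime (p : ℤ) (2 * q : ℤ) := by
      rw [Int.isCoprime_iff_gcd_eq_one]
      exact_mod_cast hcop
    have hζne : ζ ≠ 0 := Complex.exp_ne_zero _
    have h2q : ζ ^ ((2 * q : ℕ) : ℤ) = ζp ^ 2 := by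
      rw [zpow_natCast, ← hzp, ← pow_mul, mul_comm]
    have key : ζ = (ζ ^ (p : ℤ)) ^ u * (ζ ^ ((2 * q : ℕ) : ℤ)) ^ v := by
      rw [← zpow_mul, ← zpow_mul, ← zpow_add₀ hζne]
      rw [show (p : ℤ) * u + (2 * q : ℕ) * v = 1 by push_cast; linarith [huv]]
      simp
    rw [key]
    have h1 : ζq ∈ (K ⊔ L : IntermediateField ℚ ℂ) :=
      (le_sup_left : K ≤ K ⊔ L) (IntermediateField.mem_adjoin_simple_self ℚ ζq)
    have h2 : ζp ∈ (K ⊔ L : IntermediateField ℚ ℂ) :=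
      (le_sup_right : L ≤ K ⊔ L) (IntermediateField.mem_adjoin_simple_self ℚ ζp)
    have e1 : ζ ^ (p : ℤ) = ζq := by rw [zpow_natCast, hzq]
    rw [e1, h2q]
    exact mul_mem (zpow_mem h1 u) (zpow_mem (pow_mem h2 2) v)
  have hKLM : K ⊔ L = M := le_antisymm (sup_le hKM hLM) hMKL
  -- finranks
  have fK : Module.finrank ℚ K = Nat.totient (2 * q) :=
    finrank_adjoin_prim _ (by positivity) _ hq'
  have fL : Module.finrank ℚ L = Nat.totient (2 * p) :=
    finrank_adjoin_prim _ (by positivity) _ hp'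
  have fM : Module.finrank ℚ M = Nat.totient (2 * (p * q)) :=
    finrank_adjoin_prim _ (by positivity) _ h'
  have htot : Nat.totient (2 * (p * q)) = Nat.totient (2 * q) * Nat.totient (2 * p) := by
    have c2p : Nat.Coprime 2 p := by
      exact (Nat.prime_two.coprime_iff_not_dvd).mpr hp
    have : 2 * (p * q) = (2 * q) * p := by ring
    have c2q : Nat.Coprime 2 q := (Nat.prime_two.coprime_iff_not_dvd).mpr hq
    rw [this, Nat.totient_mul hcop.symm, Nat.totient_mul c2q, Nat.totient_mul c2p,
      Nat.totient_two]
    ring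
  haveI : FiniteDimensional ℚ K := by
    rw [hK]
    exact IntermediateField.adjoin.finiteDimensional ((hq'.isIntegral (by positivity)).tower_top)
  haveI : FiniteDimensional ℚ L := by
    rw [hL]
    exact IntermediateField.adjoin.finiteDimensional ((hp'.isIntegral (by positivity)).tower_top)
  have hdisj : K.LinearDisjoint L := by
    apply IntermediateField.LinearDisjoint.of_finrank_sup
    rw [hKLM, fM, fK, fL, htot]
  exact hdisj.inf_eq_bot

lemma sin_six_mul (x : ℝ) : Real.sin (6 * x) =
    Real.sin x * (32 * (Real.cos x)^5 - 32 * (Real.cos x)^3 + 6 * Real.cos x) := by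
  have h : (6:ℝ) * x = x + (x + (x + (x + (x + x)))) := by ring
  rw [h]
  simp only [Real.sin_add, Real.cos_add]
  linear_combination (6*Real.cos x*(Real.sin x)^3 - 26*(Real.cos x)^3*Real.sin x
    + 6*Real.cos x*Real.sin x) * (Real.sin_sq_add_cos_sq x)

/-- Claim inside Lemma 5 of the paper: for `p, q` coprime, not divisible by 2 or 3 and
`≠ 1`, the number `cos(πk/p)` does not lie in `ℚ(e^{iπ/q})`. -/
theorem stmt_3 (p q : ℕ)
    (hp2 : ¬ (2 ∣ p)) (hp3 : ¬ (3 ∣ p)) (hp1 : p ≠ 1)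
    (hq2 : ¬ (2 ∣ q)) (hq3 : ¬ (3 ∣ q)) (hq1 : q ≠ 1)
    (hpq : Nat.Coprime p q)
    (k : ℕ) (hk1 : 1 ≤ k) (hk2 : k ≤ p - 1) :
    (↑(Real.cos (π * k / p)) : ℂ) ∉
      IntermediateField.adjoin ℚ {Complex.exp ((π : ℂ) * Complex.I / q)} := by
  intro hmem
  have hp0 : p ≠ 0 := by rintro rfl; exact hp2 ⟨0, rfl⟩
  have hq0 : q ≠ 0 := by rintro rfl; exact hq2 ⟨0, rfl⟩
  have hppos : 0 < p := Nat.pos_of_ne_zero hp0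
  have hkp : k < p := by omega
  set θ : ℝ := π * k / p with hθ
  set ζp := Complex.exp ((π : ℂ) * Complex.I / p) with hζp
  -- cos θ as complex number lies in L
  have hpC : (p : ℂ) ≠ 0 := Nat.cast_ne_zero.mpr hp0
  have hexp : Complex.exp ((θ : ℂ) * Complex.I) = ζp ^ k := by
    rw [hζp, ← Complex.exp_nat_mul]
    congr 1
    push_cast [hθ]
    field_simp
  have hcosL : (↑(Real.cos θ) : ℂ) ∈ IntermediateField.adjoin ℚ {ζp} := by
    have h2 : 2 * Complex.cos (θ:ℂ) = ζp ^ k + (ζp ^ k)⁻¹ := by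
      rw [Complex.two_cos, neg_mul, Complex.exp_neg, hexp]
    have hζmem : ζp ∈ IntermediateField.adjoin ℚ {ζp} :=
      IntermediateField.mem_adjoin_simple_self ℚ ζp
    have : (↑(Real.cos θ) : ℂ) = (ζp ^ k + (ζp ^ k)⁻¹) / 2 := by
      rw [Complex.ofReal_cos, ← h2]; ring
    rw [this]
    have h2mem : (2:ℂ) ∈ IntermediateField.adjoin ℚ {ζp} := by
      have := _root_.natCast_mem (IntermediateField.adjoin ℚ {ζp}) 2
      simpa using this
    exact div_mem (add_mem (pow_mem hζmem k) (inv_mem (pow_mem hζmem k))) h2mem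
  -- hence rational
  have hbot : (↑(Real.cos θ) : ℂ) ∈
      (⊥ : IntermediateField ℚ ℂ) := by
    rw [← inter_bot p q hp2 hq2 hp0 hq0 hpq]
    exact ⟨hmem, hcosL⟩
  rw [IntermediateField.mem_bot] at hbot
  obtain ⟨r, hr⟩ := hbot
  have hrC : ((r : ℚ) : ℂ) = (↑(Real.cos θ) : ℂ) := by
    rw [← hr, eq_ratCast]
  have hrR : (r : ℝ) = Real.cos θ := by
    have : (((r:ℝ)) : ℂ) = (↑(Real.cos θ) : ℂ) := by push_cast; exact_mod_cast hrC
    exact Complex.ofReal_injective this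
  -- 2r is an algebraic integer
  have hp' : IsPrimitiveRoot ζp (2 * p) := prim_root_exp p hp0
  have hintζ : IsIntegral ℤ ζp := hp'.isIntegral (by positivity)
  have hinv : (ζp ^ k)⁻¹ = ζp ^ (2 * p - k) := by
    have h1 : ζp ^ (2 * p) = 1 := hp'.pow_eq_one
    refine inv_eq_of_mul_eq_one_right ?_
    rw [← pow_add, show k + (2 * p - k) = 2 * p by omega, h1]
  have hint2 : IsIntegral ℤ ((2 * r : ℚ) : ℂ) := by
    have : ((2 * r : ℚ) : ℂ) = ζp ^ k + (ζp ^ k)⁻¹ := by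
      push_cast
      rw [hrC, Complex.ofReal_cos, Complex.two_cos, neg_mul, Complex.exp_neg, hexp]
    rw [this, hinv]
    exact (hintζ.pow k).add (hintζ.pow (2 * p - k))
  have hint3 : IsIntegral ℤ (2 * r : ℚ) := by
    have hinj : Function.Injective (algebraMap ℚ ℂ) := (algebraMap ℚ ℂ).injective
    have heq : algebraMap ℚ ℂ (2 * r) = ((2 * r : ℚ) : ℂ) := eq_ratCast _ _
    exact (isIntegral_algebraMap_iff hinj).mp (by rw [heq]; exact hint2)
  obtain ⟨n, hn⟩ := IsIntegrallyClosed.isIntegral_iff.mp hint3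
  have hnQ : (n : ℚ) = 2 * r := by rw [← hn, eq_intCast]
  have hnR : (n : ℝ) = 2 * Real.cos θ := by
    have : ((n : ℚ) : ℝ) = ((2 * r : ℚ) : ℝ) := by exact_mod_cast hnQ
    push_cast at this
    rw [this, hrR]
  -- sin θ > 0
  have hθpos : 0 < θ := by
    rw [hθ]
    have : (0:ℝ) < k := by exact_mod_cast hk1
    positivity
  have hθlt : θ < π := by
    rw [hθ, div_lt_iff₀ (by exact_mod_cast hppos)]
    have : (k:ℝ) < p := by exact_mod_cast hkp
    nlinarith [Real.pi_pos]
  have hsin : 0 < Real.sin θ := Real.sin_pos_of_pos_of_lt_pi hθpos hθlt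
  -- |n| ≤ 1
  have hcos2 : (Real.cos θ)^2 < 1 := by
    nlinarith [Real.sin_sq_add_cos_sq θ]
  have hn2 : ((n:ℝ))^2 < 4 := by
    have : ((n:ℝ))^2 = 4 * (Real.cos θ)^2 := by rw [hnR]; ring
    rw [this]; nlinarith
  have hnb1 : -2 < n := by
    by_contra h
    push_neg at h
    have : (n:ℝ) ≤ -2 := by exact_mod_cast h
    nlinarith
  have hnb2 : n < 2 := by
    by_contra h
    push_neg at h
    have : (2:ℝ) ≤ (n:ℝ) := by exact_mod_cast h
    nlinarith
  -- sin (6θ) = 0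
  have hpoly : 32 * (Real.cos θ)^5 - 32 * (Real.cos θ)^3 + 6 * Real.cos θ = 0 := by
    have hc : Real.cos θ = (n:ℝ) / 2 := by linarith [hnR]
    rw [hc]
    interval_cases n <;> norm_num
  have hsin6 : Real.sin (6 * θ) = 0 := by
    rw [sin_six_mul, hpoly, mul_zero]
  obtain ⟨m, hm⟩ := Real.sin_eq_zero_iff.mp hsin6
  -- m * π = 6θ  →  m * p = 6 * k
  have hπ : (π:ℝ) ≠ 0 := Real.pi_ne_zero
  have hmp : (m : ℝ) * p = 6 * k := by
    have hpR : (p:ℝ) ≠ 0 := Nat.cast_ne_zero.mpr hp0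
    have h1 : (m:ℝ) * π * (p:ℝ) = 6 * θ * (p:ℝ) := by rw [hm]
    have h2 : 6 * θ * (p:ℝ) = 6 * π * k := by rw [hθ]; field_simp
    refine mul_right_cancel₀ hπ ?_
    calc ((m:ℝ) * p) * π = (m:ℝ) * π * (p:ℝ) := by ring
      _ = 6 * π * k := by rw [h1, h2]
      _ = (6 * k) * π := by ring
  have hmpZ : m * (p:ℤ) = 6 * (k:ℤ) := by exact_mod_cast hmp
  have hdvd : (p:ℤ) ∣ 6 * (k:ℤ) := ⟨m, by rw [← hmpZ]; ring⟩
  have hdvdN : p ∣ 6 * k := by exact_mod_cast hdvd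
  have hcop6 : Nat.Coprime p 6 := by
    have c2 : Nat.Coprime p 2 := Nat.coprime_comm.mp ((Nat.prime_two.coprime_iff_not_dvd).mpr hp2)
    have c3 : Nat.Coprime p 3 := Nat.coprime_comm.mp ((Nat.prime_three.coprime_iff_not_dvd).mpr hp3)
    have : (6:ℕ) = 2 * 3 := rfl
    rw [this]
    exact Nat.Coprime.mul_right c2 c3
  have : p ∣ k := (Nat.Coprime.dvd_of_dvd_mul_left hcop6) hdvdN
  have := Nat.le_of_dvd (by omega) this
  omega
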